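/- Let (z_k)_{k≥1} be a sequence of complex numbers with 0 < |z₁| ≤ |z₂| ≤ ..., let g(z) = ∏_{k=1}^∞ (1 − z/z_k), and let n ∈ ℕ and r > 0 satisfy: |z_n| ≤ r, 8r ≤ |z_{n+1}|, |z_{k+1}| ≥ 2|z_k| for all k ≥ n+1, and n·log(3/2) > 9/4. Then min_{|z| = 4r} |g(z)| > max_{|z| = r} |g(z)|. -/

import Mathlib

open Finset Filter

private lemma my_exp_neg_two_mul_le {x : ℝ} (hx0 : 0 ≤ x) (hx : x ≤ 1/2) :
    Real.exp (-(2*x)) ≤ 1 - x := by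
  have h1 : 2*x + 1 ≤ Real.exp (2*x) := Real.add_one_le_exp _
  have h2 : Real.exp (-(2*x)) * Real.exp (2*x) = 1 := by
    rw [← Real.exp_add]; simp
  nlinarith [Real.exp_pos (2*x), Real.exp_pos (-(2*x)),
    mul_nonneg hx0 (by linarith : (0:ℝ) ≤ 1 - 2*x)]

private lemma my_sum_shift_le (n : ℕ) (t : Finset ℕ) (ht : ∀ i ∈ t, n ≤ i) :
    ∑ i ∈ t, (1/2:ℝ)^(i-n) ≤ 2 := by
  have h : ∑ i ∈ t, (1/2:ℝ)^(i-n) = ∑ j ∈ t.image (· - n), (1/2:ℝ)^j := by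
    rw [Finset.sum_image]
    intro a ha b hb hab
    have := ht a ha; have := ht b hb; simp only at hab; omega
  rw [h]
  have hsum : ∑' j : ℕ, (1/2:ℝ)^j = 2 := by
    rw [tsum_geometric_of_lt_one (by norm_num) (by norm_num)]; norm_num
  calc ∑ j ∈ t.image (· - n), (1/2:ℝ)^j
      ≤ ∑' j : ℕ, (1/2:ℝ)^j :=
        Summable.sum_le_tsum _ (fun i _ => by positivity)
          (summable_geometric_of_lt_one (by norm_num) (by norm_num))
    _ = 2 := hsum

/-- Key estimate in Lemma on products with sparse zeros: if
`g(z) = ∏_{k≥1} (1 - z/z_k)` with `0 < |z_1| ≤ |z_2| ≤ ⋯`,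
and `n ≥ 1`, `r > 0` satisfy `|z_n| ≤ r`, `8r ≤ |z_{n+1}|`,
`|z_{k+1}| ≥ 2 |z_k|` for `k ≥ n + 1` and `n log(3/2) > 9/4`, then
`min_{|z| = 4r} |g(z)| > max_{|z| = r} |g(z)|`.
(Here the sequence is indexed from `0`, so the paper's `z_k` is `z (k - 1)`.) -/
theorem min_modulus_on_larger_circle_gt_max_modulus
    (z : ℕ → ℂ)
    (hz0 : 0 < ‖z 0‖)
    (hzmono : ∀ k : ℕ, ‖z k‖ ≤ ‖z (k + 1)‖)
    (g : ℂ → ℂ)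
    (hgprod : ∀ w : ℂ, HasProd (fun k : ℕ => 1 - w / z k) (g w))
    (n : ℕ) (hn : 1 ≤ n) (r : ℝ) (hr : 0 < r)
    (h₁ : ‖z (n - 1)‖ ≤ r)
    (h₂ : 8 * r ≤ ‖z n‖)
    (h₃ : ∀ k : ℕ, n ≤ k → 2 * ‖z k‖ ≤ ‖z (k + 1)‖)
    (h₄ : (9 : ℝ) / 4 < (n : ℝ) * Real.log (3 / 2)) :
    sSup ((fun w : ℂ => ‖g w‖) '' Metric.sphere (0 : ℂ) r) <
      sInf ((fun w : ℂ => ‖g w‖) '' Metric.sphere (0 : ℂ) (4 * r)) := by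
  have hmono : Monotone fun k => ‖z k‖ := monotone_nat_of_le_succ hzmono
  have hzpos : ∀ k, 0 < ‖z k‖ := fun k => hz0.trans_le (hmono (Nat.zero_le k))
  have hsmall : ∀ k, k < n → ‖z k‖ ≤ r := by
    intro k hk
    exact (hmono (by omega : k ≤ n - 1)).trans h₁
  have hbig : ∀ j : ℕ, (2:ℝ)^j * (8*r) ≤ ‖z (n + j)‖ := by
    intro j
    induction j with
    | zero => simpa using h₂
    | succ j ih =>
      have h3 := h₃ (n + j) (Nat.le_add_right n j)
      calc (2:ℝ)^(j+1) * (8*r) = 2 * ((2:ℝ)^j * (8*r)) := by ring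
        _ ≤ 2 * ‖z (n+j)‖ := by linarith
        _ ≤ ‖z (n+j+1)‖ := h3
  -- abs of the product
  have habsprod : ∀ w : ℂ, HasProd (fun k => ‖1 - w / z k‖) (‖g w‖) := by
    intro w
    have := (hgprod w).map
      (⟨⟨(fun x : ℂ => ‖x‖), norm_one⟩, norm_mul⟩ : ℂ →* ℝ)
      continuous_norm
    exact this
  set A := ∏ k ∈ range n, (4*r / ‖z k‖ - 1) with hA
  set B := ∏ k ∈ range n, (1 + r / ‖z k‖) with hB
  have hBpos : 0 < B := Finset.prod_pos (fun k _ => by have := hzpos k; positivity)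
  have hAB : (3/2:ℝ)^n * B ≤ A := by
    have hrw : (3/2:ℝ)^n * B = ∏ k ∈ range n, (3/2 * (1 + r / ‖z k‖)) := by
      rw [Finset.prod_mul_distrib, Finset.prod_const, Finset.card_range]
    rw [hrw, hA]
    apply Finset.prod_le_prod
    · intro k _; have := hzpos k; positivity
    · intro k hk
      have ht := hzpos k
      have hs := hsmall k (Finset.mem_range.mp hk)
      have h2 : 1 ≤ r / ‖z k‖ := (one_le_div ht).mpr hs
      have h3 : 4*r/‖z k‖ = 4*(r/‖z k‖) := by ring
      rw [h3]
      set u := r / ‖z k‖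
      linarith
  -- tail factor bounds
  have hinv : ∀ i : ℕ, n ≤ i → r / ‖z i‖ ≤ (1/2:ℝ)^(i-n) / 8 := by
    intro i hi
    obtain ⟨j, rfl⟩ : ∃ j, i = n + j := ⟨i - n, by omega⟩
    have hji : n + j - n = j := by omega
    rw [hji]
    have hb := hbig j
    have hp : (0:ℝ) < (2:ℝ)^j * (8*r) := by positivity
    have h1 : r / ‖z (n+j)‖ ≤ r / ((2:ℝ)^j * (8*r)) :=
      div_le_div_of_nonneg_left hr.le hp hb
    have h2 : r / ((2:ℝ)^j * (8*r)) = (1/2:ℝ)^j / 8 := by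
      have hh : (1/2:ℝ)^j * (2:ℝ)^j = 1 := by
        rw [← mul_pow]; norm_num
      field_simp
      nlinarith [hh]
    linarith
  -- pointwise upper bound on |w| = r
  have hub : ∀ w : ℂ, ‖w‖ = r → ‖g w‖ ≤ B * Real.exp (1/4) := by
    intro w hw
    refine le_of_tendsto (habsprod w) ?_
    filter_upwards [Filter.eventually_ge_atTop (range n)] with s hs
    rw [← Finset.prod_sdiff hs]
    have hFle : ∀ k : ℕ, ‖1 - w / z k‖ ≤ 1 + r / ‖z k‖ := by
      intro k
      have : ‖1 - w / z k‖ = ‖(1:ℂ) - w / z k‖ := rfl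
      rw [this]
      calc ‖(1:ℂ) - w / z k‖ ≤ ‖(1:ℂ)‖ + ‖w / z k‖ := norm_sub_le _ _
        _ = 1 + r / ‖z k‖ := by
            rw [norm_one, norm_div]
            simp [hw]
    have hhead : ∏ k ∈ range n, ‖1 - w / z k‖ ≤ B := by
      apply Finset.prod_le_prod (fun k _ => norm_nonneg _) (fun k _ => hFle k)
    have htail : ∏ k ∈ s \ range n, ‖1 - w / z k‖ ≤ Real.exp (1/4) := by
      have hmem : ∀ i ∈ s \ range n, n ≤ i := by
        intro i hi
        have := (Finset.mem_sdiff.mp hi).2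
        simpa using Nat.le_of_not_lt (by simpa using this)
      calc ∏ k ∈ s \ range n, ‖1 - w / z k‖
          ≤ ∏ k ∈ s \ range n, Real.exp ((1/8) * (1/2:ℝ)^(k-n)) := by
            apply Finset.prod_le_prod (fun k _ => norm_nonneg _)
            intro k hk
            have hk' := hmem k hk
            have h1 := hFle k
            have h2 := hinv k hk'
            have h3 := Real.add_one_le_exp ((1/8) * (1/2:ℝ)^(k-n))
            linarith
        _ = Real.exp (∑ k ∈ s \ range n, (1/8) * (1/2:ℝ)^(k-n)) := (Real.exp_sum _ _).symm
        _ ≤ Real.exp (1/4) := by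
            apply Real.exp_le_exp.mpr
            have := my_sum_shift_le n (s \ range n) hmem
            rw [← Finset.mul_sum]
            linarith
    calc (∏ k ∈ s \ range n, ‖1 - w / z k‖) * ∏ k ∈ range n, ‖1 - w / z k‖
        ≤ Real.exp (1/4) * B := by
          apply mul_le_mul htail hhead
            (Finset.prod_nonneg fun k _ => norm_nonneg _) (Real.exp_pos _).le
      _ = B * Real.exp (1/4) := mul_comm _ _
  -- pointwise lower bound on |w| = 4r
  have hlb : ∀ w : ℂ, ‖w‖ = 4*r → A * Real.exp (-2) ≤ ‖g w‖ := by
    intro w hw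
    refine ge_of_tendsto (habsprod w) ?_
    filter_upwards [Filter.eventually_ge_atTop (range n)] with s hs
    rw [← Finset.prod_sdiff hs]
    have hhead : A ≤ ∏ k ∈ range n, ‖1 - w / z k‖ := by
      rw [hA]
      apply Finset.prod_le_prod
      · intro k hk
        have ht := hzpos k
        have hs' := hsmall k (Finset.mem_range.mp hk)
        have : (4:ℝ) ≤ 4*r / ‖z k‖ := by
          rw [le_div_iff₀ ht]; linarith
        linarith
      · intro k hk
        have ht := hzpos k
        have h1 : ‖w / z k‖ - ‖(1:ℂ)‖ ≤ ‖w / z k - 1‖ := norm_sub_norm_le _ _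
        have h2 : ‖w / z k - 1‖ = ‖(1:ℂ) - w / z k‖ := norm_sub_rev _ _
        have h3 : ‖w / z k‖ = 4*r / ‖z k‖ := by
          rw [norm_div]; simp [hw]
        have : ‖1 - w / z k‖ = ‖(1:ℂ) - w / z k‖ := rfl
        rw [this]
        rw [h3, norm_one] at h1
        linarith [h1, h2.symm.le, h2.le]
    have htail : Real.exp (-2) ≤ ∏ k ∈ s \ range n, ‖1 - w / z k‖ := by
      have hmem : ∀ i ∈ s \ range n, n ≤ i := by
        intro i hi
        have := (Finset.mem_sdiff.mp hi).2
        simpa using Nat.le_of_not_lt (by simpa using this)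
      calc Real.exp (-2)
          ≤ Real.exp (-(∑ k ∈ s \ range n, (1/2:ℝ)^(k-n))) := by
            apply Real.exp_le_exp.mpr
            have := my_sum_shift_le n (s \ range n) hmem
            linarith
        _ = ∏ k ∈ s \ range n, Real.exp (-((1/2:ℝ)^(k-n))) := by
            rw [← Real.exp_sum, ← Finset.sum_neg_distrib]
        _ ≤ ∏ k ∈ s \ range n, ‖1 - w / z k‖ := by
            apply Finset.prod_le_prod (fun k _ => (Real.exp_pos _).le)
            intro k hk
            have hk' := hmem k hk
            have h2 := hinv k hk'
            -- |w/z k| = 4r/|z k| ≤ 4 * ((1/2)^(k-n)/8) = (1/2)^(k-n)/2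
            have h3 : ‖w / z k‖ = 4 * (r / ‖z k‖) := by
              rw [norm_div]; simp [hw]; ring
            have h4 : ‖w / z k‖ ≤ (1/2:ℝ)^(k-n) / 2 := by rw [h3]; linarith
            have hx0 : (0:ℝ) ≤ (1/2:ℝ)^(k-n) / 2 := by positivity
            have hx1 : (1/2:ℝ)^(k-n) / 2 ≤ 1/2 := by
              have : (1/2:ℝ)^(k-n) ≤ 1 := by
                apply pow_le_one₀ <;> norm_num
              linarith
            have hexp := my_exp_neg_two_mul_le hx0 hx1
            have h5 : ‖(1:ℂ)‖ - ‖w / z k‖ ≤ ‖(1:ℂ) - w / z k‖ := norm_sub_norm_le _ _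
            rw [norm_one] at h5
            have : ‖1 - w / z k‖ = ‖(1:ℂ) - w / z k‖ := rfl
            rw [this]
            have heq : -(2 * ((1/2:ℝ)^(k-n) / 2)) = -((1/2:ℝ)^(k-n)) := by ring
            rw [heq] at hexp
            calc Real.exp (-((1/2:ℝ)^(k-n)))
                ≤ 1 - (1/2:ℝ)^(k-n) / 2 := hexp
              _ ≤ 1 - ‖w / z k‖ := by linarith
              _ ≤ ‖(1:ℂ) - w / z k‖ := h5
    calc A * Real.exp (-2) = Real.exp (-2) * A := mul_comm _ _
      _ ≤ (∏ k ∈ s \ range n, ‖1 - w / z k‖) *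
            ∏ k ∈ range n, ‖1 - w / z k‖ := by
          apply mul_le_mul htail hhead ?_ ?_
          · rw [hA]
            apply Finset.prod_nonneg
            intro k hk
            have ht := hzpos k
            have hs' := hsmall k (Finset.mem_range.mp hk)
            have : (4:ℝ) ≤ 4*r / ‖z k‖ := by
              rw [le_div_iff₀ ht]; linarith
            linarith
          · exact Finset.prod_nonneg fun k _ => norm_nonneg _
  -- combine
  have hpow : Real.exp (9/4) < (3/2:ℝ)^n := by
    have h := Real.exp_lt_exp.mpr h₄
    rwa [Real.exp_nat_mul, Real.exp_log (by norm_num : (0:ℝ) < 3/2)] at h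
  have hmid : B * Real.exp (1/4) < A * Real.exp (-2) := by
    have h2 : Real.exp (9/4) * Real.exp (-2) = Real.exp (1/4) := by
      rw [← Real.exp_add]; norm_num
    have h1 : Real.exp (9/4) * B < (3/2:ℝ)^n * B := mul_lt_mul_of_pos_right hpow hBpos
    calc B * Real.exp (1/4) = (Real.exp (9/4) * B) * Real.exp (-2) := by rw [← h2]; ring
      _ < ((3/2:ℝ)^n * B) * Real.exp (-2) := mul_lt_mul_of_pos_right h1 (Real.exp_pos _)
      _ ≤ A * Real.exp (-2) := mul_le_mul_of_nonneg_right hAB (Real.exp_pos _).le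
  have hne1 : (Metric.sphere (0:ℂ) r).Nonempty := NormedSpace.sphere_nonempty.mpr hr.le
  have hne2 : (Metric.sphere (0:ℂ) (4*r)).Nonempty :=
    NormedSpace.sphere_nonempty.mpr (by linarith)
  have hSup : sSup ((fun w : ℂ => ‖g w‖) '' Metric.sphere (0 : ℂ) r)
      ≤ B * Real.exp (1/4) := by
    apply csSup_le (hne1.image _)
    rintro x ⟨w, hw, rfl⟩
    exact hub w (by simpa using mem_sphere_zero_iff_norm.mp hw)
  have hInf : A * Real.exp (-2)
      ≤ sInf ((fun w : ℂ => ‖g w‖) '' Metric.sphere (0 : ℂ) (4*r)) := by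
    apply le_csInf (hne2.image _)
    rintro x ⟨w, hw, rfl⟩
    exact hlb w (by simpa using mem_sphere_zero_iff_norm.mp hw)
  calc sSup ((fun w : ℂ => ‖g w‖) '' Metric.sphere (0 : ℂ) r)
      ≤ B * Real.exp (1/4) := hSup
    _ < A * Real.exp (-2) := hmid
    _ ≤ sInf ((fun w : ℂ => ‖g w‖) '' Metric.sphere (0 : ℂ) (4*r)) := hInf
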